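/- The finite compactly supported Borel measure μ on ℝ given by μ = λ|_{[0,1]} + δ₂ (Lebesgue measure restricted to [0,1] plus the Dirac point mass at 2) admits no frame measure: there exist no Borel measure ν on ℝ and constants A, B > 0 such that A ‖f‖²_{L²(μ)} ≤ ∫ |(f dμ)^(t)|² dν(t) ≤ B ‖f‖²_{L²(μ)} for all f ∈ L²(μ). -/

import Mathlib

open MeasureTheory Filter Metric Complex Set
open scoped ENNReal NNReal Real Topology

noncomputable section

/-- The Fourier transform of the measure `f dμ` on `ℝ`:
`(f dμ)^(t) = ∫ f(x) e^{-2πi t x} dμ(x)`. -/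
def ftm1 (μ : Measure ℝ) (f : ℝ → ℂ) (t : ℝ) : ℂ :=
  ∫ x, f x * Complex.exp (-(2 * Real.pi * t * x) * Complex.I) ∂μ

/-- `ν` is a Bessel measure for `μ` with bound `B`. -/
def IsBesselBound1 (μ ν : Measure ℝ) (B : ℝ) : Prop :=
  ∀ f : ℝ → ℂ, MemLp f 2 μ →
    ∫⁻ t, (‖ftm1 μ f t‖₊ : ℝ≥0∞) ^ 2 ∂ν ≤ ENNReal.ofReal B * ∫⁻ x, (‖f x‖₊ : ℝ≥0∞) ^ 2 ∂μ

/-- `ν` is a frame measure for `μ` with bounds `A, B`. -/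
def IsFrameBounds1 (μ ν : Measure ℝ) (A B : ℝ) : Prop :=
  ∀ f : ℝ → ℂ, MemLp f 2 μ →
    ENNReal.ofReal A * ∫⁻ x, (‖f x‖₊ : ℝ≥0∞) ^ 2 ∂μ ≤ ∫⁻ t, (‖ftm1 μ f t‖₊ : ℝ≥0∞) ^ 2 ∂ν ∧
    ∫⁻ t, (‖ftm1 μ f t‖₊ : ℝ≥0∞) ^ 2 ∂ν ≤ ENNReal.ofReal B * ∫⁻ x, (‖f x‖₊ : ℝ≥0∞) ^ 2 ∂μ

/-- The interval `x + R·Q` where `Q = [0,1)`. -/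
def cube1 (x R : ℝ) : Set ℝ := Set.Ico x (x + R)

/-- The `α`-upper Beurling density on `ℝ`. -/
def beurlingDensity1 (ν : Measure ℝ) (α : ℝ) : ℝ≥0∞ :=
  limsup (fun R : ℝ => ⨆ x : ℝ, ν (cube1 x R) / ENNReal.ofReal (R ^ α)) atTop

/-- The upper Beurling dimension on `ℝ`. -/
def beurlingDim1 (ν : Measure ℝ) : ℝ≥0∞ :=
  ⨆ (α : ℝ) (_ : 0 ≤ α) (_ : beurlingDensity1 ν α = ∞), ENNReal.ofReal α

/-- The lower Beurling density on `ℝ`: `D⁻(ν) = liminf_{R→∞} inf_x ν(x+RQ)/R`. -/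
def lowerBeurlingDensity1 (ν : Measure ℝ) : ℝ≥0∞ :=
  liminf (fun R : ℝ => ⨅ x : ℝ, ν (cube1 x R) / ENNReal.ofReal R) atTop

namespace Stmt1Aux

def μ0 : Measure ℝ := volume.restrict (Set.Icc (0:ℝ) 1) + Measure.dirac 2

instance : IsFiniteMeasure μ0 := by
  constructor
  simp [μ0, Real.volume_Icc]

/-- the modulated indicator functions -/
def g (n : ℕ) : ℝ → ℂ :=
  Set.indicator (Set.Icc (0:ℝ) 1) (fun x => Complex.exp ((2 * Real.pi * n * x : ℝ) * Complex.I))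

lemma g_meas (n : ℕ) : Measurable (g n) := by
  apply Measurable.indicator _ measurableSet_Icc
  fun_prop

lemma g_norm_le (n : ℕ) (x : ℝ) : ‖g n x‖ ≤ 1 := by
  unfold g
  by_cases hx : x ∈ Set.Icc (0:ℝ) 1
  · rw [Set.indicator_of_mem hx]
    exact le_of_eq (Complex.norm_exp_ofReal_mul_I _)
  · rw [Set.indicator_of_notMem hx]; simp

lemma g_memℒp (n : ℕ) : MemLp (g n) 2 μ0 :=
  MemLp.of_bound (g_meas n).aestronglyMeasurable 1 (Filter.Eventually.of_forall (g_norm_le n))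

lemma integrand_integrable (n : ℕ) (t : ℝ) :
    Integrable (fun x => g n x * Complex.exp (-(2 * Real.pi * t * x) * Complex.I)) μ0 := by
  apply Integrable.mono' (integrable_const 1)
  · exact ((g_meas n).mul (by fun_prop)).aestronglyMeasurable
  · refine Filter.Eventually.of_forall fun x => ?_
    rw [norm_mul]
    calc ‖g n x‖ * ‖Complex.exp (-(2 * Real.pi * t * x) * Complex.I)‖
        ≤ 1 * 1 := by
          apply mul_le_mul (g_norm_le n x) _ (norm_nonneg _) zero_le_one
          have : (-(2 * Real.pi * t * x) : ℂ) * Complex.I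
              = ((-(2 * Real.pi * t * x) : ℝ) : ℂ) * Complex.I := by push_cast; ring
          rw [this, Complex.norm_exp_ofReal_mul_I]
      _ = 1 := one_mul 1

lemma ftm_g_eq (n : ℕ) (t : ℝ) :
    ftm1 μ0 (g n) t
      = ∫ x in Set.Icc (0:ℝ) 1,
          Complex.exp (((2 * Real.pi * (n - t) : ℝ) * Complex.I) * x) := by
  have hint := integrand_integrable n t
  rw [show μ0 = volume.restrict (Set.Icc (0:ℝ) 1) + Measure.dirac 2 from rfl] at hint
  rw [integrable_add_measure] at hint
  unfold ftm1 μ0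
  rw [integral_add_measure hint.1 hint.2]
  have h2 : (∫ x, g n x * Complex.exp (-(2 * Real.pi * t * x) * Complex.I)
      ∂(Measure.dirac 2)) = 0 := by
    rw [integral_dirac]
    have : (2:ℝ) ∉ Set.Icc (0:ℝ) 1 := by norm_num
    simp [g, Set.indicator_of_notMem this]
  rw [h2, add_zero]
  refine integral_congr_ae ?_
  have hae : g n =ᵐ[volume.restrict (Set.Icc (0:ℝ) 1)]
      (fun x => Complex.exp ((2 * Real.pi * n * x : ℝ) * Complex.I)) :=
    indicator_ae_eq_restrict measurableSet_Icc
  filter_upwards [hae] with x hx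
  rw [hx, ← Complex.exp_add]
  congr 1
  push_cast
  ring


/-- Trivial bound on the transform. -/
lemma norm_int_exp_le_one (c : ℝ) :
    ‖∫ x in Set.Icc (0:ℝ) 1, Complex.exp (((c:ℝ):ℂ) * Complex.I * x)‖ ≤ 1 := by
  have h := norm_setIntegral_le_of_norm_le_const (μ := volume) (s := Set.Icc (0:ℝ) 1)
      (C := 1) (f := fun x : ℝ => Complex.exp (((c:ℝ):ℂ) * Complex.I * x))
      (by simp [Real.volume_Icc]) (fun x _ => ?_)
  · simpa [Measure.real, Real.volume_Icc] using h
  · show ‖Complex.exp (((c:ℝ):ℂ) * Complex.I * (x:ℂ))‖ ≤ 1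
    have : ((c:ℝ):ℂ) * Complex.I * (x:ℂ) = ((c * x : ℝ) : ℂ) * Complex.I := by
      push_cast; ring
    rw [this, Complex.norm_exp_ofReal_mul_I]

/-- Decay bound on the transform. -/
lemma norm_int_exp_le (c : ℝ) (hc : c ≠ 0) :
    ‖∫ x in Set.Icc (0:ℝ) 1, Complex.exp (((c:ℝ):ℂ) * Complex.I * x)‖ ≤ 2 / |c| := by
  have hc' : ((c:ℝ):ℂ) * Complex.I ≠ 0 := by
    simp [Complex.ext_iff, hc]
  rw [MeasureTheory.integral_Icc_eq_integral_Ioc,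
    ← intervalIntegral.integral_of_le (zero_le_one' ℝ),
    integral_exp_mul_complex hc']
  rw [norm_div]
  have h1 : ‖((c:ℝ):ℂ) * Complex.I‖ = |c| := by
    simp [Complex.norm_def, Complex.normSq_mul]
  rw [h1]
  gcongr
  calc ‖Complex.exp (((c:ℝ):ℂ) * Complex.I * (1:ℝ)) - Complex.exp (((c:ℝ):ℂ) * Complex.I * (0:ℝ))‖
      ≤ ‖Complex.exp (((c:ℝ):ℂ) * Complex.I * (1:ℝ))‖
        + ‖Complex.exp (((c:ℝ):ℂ) * Complex.I * (0:ℝ))‖ := norm_sub_le _ _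
    _ ≤ 2 := by
        have e1 : ((c:ℝ):ℂ) * Complex.I * ((1:ℝ):ℂ) = ((c:ℝ):ℂ) * Complex.I := by push_cast; ring
        have e2 : ((c:ℝ):ℂ) * Complex.I * ((0:ℝ):ℂ) = 0 := by push_cast; ring
        rw [e1, e2, Complex.norm_exp_ofReal_mul_I]
        simp
        norm_num


lemma sq_nnnorm_le {z : ℂ} {r : ℝ} (h : ‖z‖ ≤ r) :
    (‖z‖₊ : ℝ≥0∞) ^ 2 ≤ ENNReal.ofReal (r ^ 2) := by
  rw [← ENNReal.ofReal_coe_nnreal, coe_nnnorm, ← ENNReal.ofReal_pow (norm_nonneg z)]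
  exact ENNReal.ofReal_le_ofReal (pow_le_pow_left₀ (norm_nonneg z) h 2)

lemma sq_nnnorm_le_one {z : ℂ} (h : ‖z‖ ≤ 1) : (‖z‖₊ : ℝ≥0∞) ^ 2 ≤ 1 := by
  simpa using sq_nnnorm_le h

lemma lintegral_g_sq (n : ℕ) : ∫⁻ x, (‖g n x‖₊ : ℝ≥0∞) ^ 2 ∂μ0 = 1 := by
  have hfun : (fun x => (‖g n x‖₊ : ℝ≥0∞) ^ 2)
      = Set.indicator (Set.Icc (0:ℝ) 1) (fun _ => 1) := by
    funext x
    by_cases hx : x ∈ Set.Icc (0:ℝ) 1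
    · rw [Set.indicator_of_mem hx]
      unfold g
      rw [Set.indicator_of_mem hx]
      have h1 : ((‖Complex.exp (((2 * Real.pi * n * x : ℝ):ℂ) * Complex.I)‖₊ : ℝ≥0∞)) = 1 := by
        rw [← ENNReal.ofReal_coe_nnreal, coe_nnnorm, Complex.norm_exp_ofReal_mul_I, ENNReal.ofReal_one]
      rw [h1, one_pow]
    · rw [Set.indicator_of_notMem hx]
      unfold g
      rw [Set.indicator_of_notMem hx]
      simp
  rw [hfun, lintegral_indicator measurableSet_Icc, setLIntegral_one]
  unfold μ0
  rw [Measure.add_apply, Measure.restrict_apply measurableSet_Icc,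
    Measure.dirac_apply' _ measurableSet_Icc]
  have : (2:ℝ) ∉ Set.Icc (0:ℝ) 1 := by norm_num
  simp [this, Real.volume_Icc]

def h0 : ℝ → ℂ := Set.indicator {(2:ℝ)} 1

lemma h0_meas : Measurable h0 := measurable_one.indicator (measurableSet_singleton 2)

lemma h0_norm_le (x : ℝ) : ‖h0 x‖ ≤ 1 := by
  unfold h0
  by_cases hx : x ∈ ({(2:ℝ)} : Set ℝ) <;> simp [hx]

lemma h0_memℒp : MemLp h0 2 μ0 :=
  MemLp.of_bound h0_meas.aestronglyMeasurable 1 (Filter.Eventually.of_forall h0_norm_le)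

lemma lintegral_h0_sq : ∫⁻ x, (‖h0 x‖₊ : ℝ≥0∞) ^ 2 ∂μ0 = 1 := by
  have hfun : (fun x => (‖h0 x‖₊ : ℝ≥0∞) ^ 2)
      = Set.indicator ({(2:ℝ)} : Set ℝ) (fun _ => 1) := by
    funext x
    by_cases hx : x ∈ ({(2:ℝ)} : Set ℝ)
    · rw [Set.indicator_of_mem hx]
      unfold h0
      rw [Set.indicator_of_mem hx]
      simp
    · rw [Set.indicator_of_notMem hx]
      unfold h0
      rw [Set.indicator_of_notMem hx]
      simp
  rw [hfun, lintegral_indicator (measurableSet_singleton 2), setLIntegral_one]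
  unfold μ0
  rw [Measure.add_apply, Measure.restrict_apply (measurableSet_singleton 2)]
  have h1 : volume (({(2:ℝ)} : Set ℝ) ∩ Set.Icc 0 1) = 0 :=
    measure_mono_null Set.inter_subset_left (Real.volume_singleton)
  simp [h1, Measure.dirac_apply]

lemma norm_ftm_h0 (t : ℝ) : ‖ftm1 μ0 h0 t‖ = 1 := by
  have hint : Integrable (fun x => h0 x * Complex.exp (-(2 * Real.pi * t * x) * Complex.I)) μ0 := by
    apply Integrable.mono' (integrable_const 1)
    · exact (h0_meas.mul (by fun_prop)).aestronglyMeasurable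
    · refine Filter.Eventually.of_forall fun x => ?_
      rw [norm_mul]
      have he : (-(2 * Real.pi * t * x) : ℂ) * Complex.I
          = ((-(2 * Real.pi * t * x) : ℝ) : ℂ) * Complex.I := by push_cast; ring
      calc ‖h0 x‖ * ‖Complex.exp (-(2 * Real.pi * t * x) * Complex.I)‖
          ≤ 1 * 1 := by
            rw [he, Complex.norm_exp_ofReal_mul_I]
            simpa using h0_norm_le x
        _ = 1 := one_mul 1
  rw [show μ0 = volume.restrict (Set.Icc (0:ℝ) 1) + Measure.dirac 2 from rfl] at hint
  rw [integrable_add_measure] at hint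
  unfold ftm1 μ0
  rw [integral_add_measure hint.1 hint.2]
  have hz : (∫ x, h0 x * Complex.exp (-(2 * Real.pi * t * x) * Complex.I)
      ∂(volume.restrict (Set.Icc (0:ℝ) 1))) = 0 := by
    apply integral_eq_zero_of_ae
    have hnull : (volume.restrict (Set.Icc (0:ℝ) 1)) ({(2:ℝ)} : Set ℝ) = 0 := by
      rw [Measure.restrict_apply (measurableSet_singleton 2)]
      exact measure_mono_null Set.inter_subset_left (Real.volume_singleton)
    have : ∀ᵐ x ∂(volume.restrict (Set.Icc (0:ℝ) 1)), x ∉ ({(2:ℝ)} : Set ℝ) :=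
      ae_iff.mpr (by simpa using hnull)
    filter_upwards [this] with x hx
    unfold h0
    rw [Set.indicator_of_notMem hx, zero_mul]
    rfl
  rw [hz, zero_add, integral_dirac]
  have h2 : h0 2 = 1 := by
    unfold h0; simp
  rw [h2, one_mul]
  have he : (-(2 * Real.pi * t * (2:ℝ)) : ℂ) * Complex.I
      = ((-(2 * Real.pi * t * 2) : ℝ) : ℂ) * Complex.I := by push_cast; ring
  rw [show ((2:ℝ):ℂ) = ((2:ℝ):ℂ) from rfl]
  rw [he, Complex.norm_exp_ofReal_mul_I]


def T (n : ℕ) : Set ℝ := {t : ℝ | ((n:ℝ)+1)/2 < |t|}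

lemma T_meas (n : ℕ) : MeasurableSet (T n) :=
  measurableSet_lt measurable_const continuous_abs.measurable

lemma pointwise_bound (n : ℕ) (t : ℝ) :
    (‖ftm1 μ0 (g (n+1)) t‖₊ : ℝ≥0∞) ^ 2
      ≤ ENNReal.ofReal ((2/((n:ℝ)+1))^2) + Set.indicator (T n) (fun _ => 1) t := by
  by_cases ht : t ∈ T n
  · rw [Set.indicator_of_mem ht]
    refine le_trans ?_ le_add_self
    have h := norm_int_exp_le_one (2 * Real.pi * (((n+1:ℕ):ℝ) - t))
    rw [← ftm_g_eq] at h
    exact sq_nnnorm_le_one h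
  · rw [Set.indicator_of_notMem ht, add_zero]
    have ht' : |t| ≤ ((n:ℝ)+1)/2 := not_lt.1 ht
    obtain ⟨htl, htr⟩ := abs_le.1 ht'
    set c := 2 * Real.pi * (((n+1:ℕ):ℝ) - t) with hc
    have hπ := Real.pi_gt_three
    have hcpos : 0 < c := by
      rw [hc]; push_cast; nlinarith
    have hge : (n:ℝ)+1 ≤ |c| := by
      rw [abs_of_pos hcpos, hc]; push_cast; nlinarith
    have hc0 : c ≠ 0 := ne_of_gt hcpos
    have h := norm_int_exp_le c hc0
    rw [← ftm_g_eq] at h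
    refine sq_nnnorm_le (h.trans ?_)
    exact div_le_div_of_nonneg_left (by norm_num) (by positivity) hge

end Stmt1Aux


/-- The measure `μ = λ|_{[0,1]} + δ₂` on `ℝ` admits no frame measure. -/
theorem stmt1 :
    ¬ ∃ (ν : Measure ℝ) (A B : ℝ), 0 < A ∧ 0 < B ∧
      IsFrameBounds1 (volume.restrict (Set.Icc (0 : ℝ) 1) + Measure.dirac 2) ν A B := by

  rintro ⟨ν, A, B, hA, hB, hframe⟩
  have hframe' : IsFrameBounds1 Stmt1Aux.μ0 ν A B := hframe
  -- Step 1: ν is a finite measure, using the Dirac point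
  have hfin : ν Set.univ ≠ ∞ := by
    have hup := (hframe' _ Stmt1Aux.h0_memℒp).2
    rw [Stmt1Aux.lintegral_h0_sq, mul_one] at hup
    have hone : (∫⁻ t, (‖ftm1 Stmt1Aux.μ0 Stmt1Aux.h0 t‖₊ : ℝ≥0∞) ^ 2 ∂ν) = ν Set.univ := by
      have : ∀ t : ℝ, (‖ftm1 Stmt1Aux.μ0 Stmt1Aux.h0 t‖₊ : ℝ≥0∞) ^ 2 = 1 := fun t => by
        rw [← ENNReal.ofReal_coe_nnreal, coe_nnnorm, Stmt1Aux.norm_ftm_h0]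
        simp
      simp only [this]
      exact lintegral_one
    rw [hone] at hup
    exact ne_top_of_le_ne_top ENNReal.ofReal_ne_top hup
  -- Step 2: lower frame bound for the modulations
  have key : ∀ n : ℕ, ENNReal.ofReal A
      ≤ ENNReal.ofReal ((2/((n:ℝ)+1))^2) * ν Set.univ + ν (Stmt1Aux.T n) := by
    intro n
    have hlow := (hframe' _ (Stmt1Aux.g_memℒp (n+1))).1
    rw [Stmt1Aux.lintegral_g_sq, mul_one] at hlow
    refine hlow.trans ?_
    calc ∫⁻ t, (‖ftm1 Stmt1Aux.μ0 (Stmt1Aux.g (n+1)) t‖₊ : ℝ≥0∞) ^ 2 ∂ν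
        ≤ ∫⁻ t, (ENNReal.ofReal ((2/((n:ℝ)+1))^2)
            + Set.indicator (Stmt1Aux.T n) (fun _ => 1) t) ∂ν :=
          lintegral_mono (Stmt1Aux.pointwise_bound n)
      _ = ENNReal.ofReal ((2/((n:ℝ)+1))^2) * ν Set.univ + ν (Stmt1Aux.T n) := by
          rw [lintegral_add_left measurable_const, lintegral_const,
            lintegral_indicator (Stmt1Aux.T_meas n), setLIntegral_one]
  -- Step 3: the right-hand side tends to 0
  have h1 : Tendsto (fun n : ℕ => ν (Stmt1Aux.T n)) atTop (𝓝 0) := by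
    have hiInter : (⋂ n, Stmt1Aux.T n) = ∅ := by
      ext t
      simp only [Set.mem_iInter, Set.mem_empty_iff_false, iff_false, not_forall]
      obtain ⟨n, hn⟩ := exists_nat_ge (2 * |t|)
      refine ⟨n, ?_⟩
      simp only [Stmt1Aux.T, Set.mem_setOf_eq, not_lt]
      have h0 : (0:ℝ) ≤ |t| := abs_nonneg t
      linarith
    have := MeasureTheory.tendsto_measure_iInter_atTop (μ := ν)
      (fun n => (Stmt1Aux.T_meas n).nullMeasurableSet)
      (fun n m hnm => by
        intro t ht
        simp only [Stmt1Aux.T, Set.mem_setOf_eq] at ht ⊢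
        have : ((n:ℝ)+1)/2 ≤ ((m:ℝ)+1)/2 := by
          have : (n:ℝ) ≤ m := Nat.cast_le.mpr hnm
          linarith
        linarith)
      ⟨0, ne_top_of_le_ne_top hfin (measure_mono (Set.subset_univ _))⟩
    rw [hiInter] at this
    simpa [Function.comp_def] using this
  have h2 : Tendsto (fun n : ℕ => ENNReal.ofReal ((2/((n:ℝ)+1))^2) * ν Set.univ)
      atTop (𝓝 0) := by
    have ha : Tendsto (fun n : ℕ => ((n:ℝ)+1)) atTop atTop :=
      tendsto_atTop_add_const_right _ 1 tendsto_natCast_atTop_atTop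
    have hr : Tendsto (fun n : ℕ => (2/((n:ℝ)+1))^2) atTop (𝓝 0) := by
      have := (tendsto_const_nhds (x := (2:ℝ)) (f := atTop)).div_atTop ha
      have h := this.pow 2
      simpa using h
    have ho : Tendsto (fun n : ℕ => ENNReal.ofReal ((2/((n:ℝ)+1))^2)) atTop (𝓝 0) := by
      have := ENNReal.tendsto_ofReal hr
      simpa using this
    have := ENNReal.Tendsto.mul_const ho (Or.inr hfin)
    simpa using this
  have h3 : Tendsto (fun n : ℕ => ENNReal.ofReal ((2/((n:ℝ)+1))^2) * ν Set.univ
      + ν (Stmt1Aux.T n)) atTop (𝓝 0) := by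
    have := h2.add h1
    simpa using this
  have hle : ENNReal.ofReal A ≤ 0 := ge_of_tendsto h3 (Filter.Eventually.of_forall key)
  have : (0:ℝ≥0∞) < ENNReal.ofReal A := ENNReal.ofReal_pos.mpr hA
  exact absurd hle (not_le.mpr this)
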